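/- Let G be a connected multigraph and f a divisor on G. Then f is recurrent if and only if there is a legal game starting from f in which every vertex fires exactly once. -/

import Mathlib

variable {V : Type*} [Fintype V] [DecidableEq V]

/-- The degree of vertex `v` in the multigraph with edge-multiplicity function `m`. -/
def mgDeg (m : V → V → ℕ) (v : V) : ℕ := ∑ u, m v u

/-- The divisor obtained from `f` by firing vertex `v`. -/
def mgFire (m : V → V → ℕ) (f : V → ℤ) (v : V) : V → ℤ :=
  fun u => if u = v then f v - mgDeg m v else f u + m v u

/-- The divisor obtained from `f` by firing the vertices of `L` in order. -/
def mgPlay (m : V → V → ℕ) (f : V → ℤ) (L : List V) : V → ℤ :=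
  L.foldl (mgFire m) f

/-- `L` is a legal game from `f`: each fired vertex is active when fired. -/
def mgLegal (m : V → V → ℕ) : (V → ℤ) → List V → Prop
  | _, [] => True
  | f, v :: L => ((mgDeg m v : ℤ) ≤ f v) ∧ mgLegal m (mgFire m f v) L

/-- A divisor is stable if no vertex is active. -/
def mgStable (m : V → V → ℕ) (f : V → ℤ) : Prop := ∀ v, f v < (mgDeg m v : ℤ)

/-- A divisor is halting if some legal game from it ends at a stable divisor. -/
def mgHalting (m : V → V → ℕ) (f : V → ℤ) : Prop :=
  ∃ L : List V, mgLegal m f L ∧ mgStable m (mgPlay m f L)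

/-- A divisor is recurrent if some non-empty legal game from it leads back to it. -/
def mgRecurrent (m : V → V → ℕ) (f : V → ℤ) : Prop :=
  ∃ L : List V, L ≠ [] ∧ mgLegal m f L ∧ mgPlay m f L = f

/-- A divisor is effective if it is nonnegative everywhere. -/
def mgEffective (f : V → ℤ) : Prop := ∀ v, 0 ≤ f v

/-- The degree of a divisor. -/
def mgDegDiv (f : V → ℤ) : ℤ := ∑ v, f v

/-- Distance of a divisor from a recurrent state. -/
noncomputable def mgDistRec (m : V → V → ℕ) (f : V → ℤ) : ℕ :=
  sInf {n : ℕ | ∃ g : V → ℤ, mgEffective g ∧ mgDegDiv g = (n : ℤ) ∧ mgRecurrent m (f + g)}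

/-- Distance of a divisor from a non-halting state. -/
noncomputable def mgDistNonhalt (m : V → V → ℕ) (f : V → ℤ) : ℕ :=
  sInf {n : ℕ | ∃ g : V → ℤ, mgEffective g ∧ mgDegDiv g = (n : ℤ) ∧ ¬ mgHalting m (f + g)}

/-- A multigraph is connected if any two vertices are joined by a path of
positive-multiplicity edges. -/
def mgConnected (m : V → V → ℕ) : Prop :=
  ∀ u v : V, Relation.ReflTransGen (fun a b => 0 < m a b) u v

/-- `f` and `g` are linearly equivalent: `f` can be transformed to `g` by firings. -/
def mgLinEquiv (m : V → V → ℕ) (f g : V → ℤ) : Prop :=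
  ∃ L : List V, mgPlay m f L = g

/-- A divisor is winnable if it is linearly equivalent to an effective divisor. -/
def mgWinnable (m : V → V → ℕ) (f : V → ℤ) : Prop :=
  ∃ g : V → ℤ, mgEffective g ∧ mgLinEquiv m f g

/-- The rank of a divisor. -/
noncomputable def mgRank (m : V → V → ℕ) (f : V → ℤ) : ℤ :=
  ((sInf {n : ℕ | ∃ g : V → ℤ, mgEffective g ∧ mgDegDiv g = (n : ℤ) ∧
    ¬ mgWinnable m (f - g)} : ℕ) : ℤ) - 1

lemma play_append (m : V → V → ℕ) (f : V → ℤ) (P R : List V) :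
    mgPlay m f (P ++ R) = mgPlay m (mgPlay m f P) R := by
  simp [mgPlay, List.foldl_append]

lemma legal_append_iff (m : V → V → ℕ) (f : V → ℤ) (P R : List V) :
    mgLegal m f (P ++ R) ↔ mgLegal m f P ∧ mgLegal m (mgPlay m f P) R := by
  induction P generalizing f with
  | nil => simp [mgLegal, mgPlay]
  | cons a P ih => simp [mgLegal, mgPlay, ih, and_assoc]

lemma play_eq (m : V → V → ℕ) (hloop : ∀ v, m v v = 0) (f : V → ℤ) (L : List V) (u : V) :
    mgPlay m f L u = f u + ∑ v, (L.count v : ℤ) * m v u - (L.count u : ℤ) * mgDeg m u := by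
  induction L generalizing f with
  | nil => simp [mgPlay]
  | cons a L ih =>
    have h1 : mgPlay m f (a :: L) u = mgPlay m (mgFire m f a) L u := rfl
    rw [h1, ih]
    have hc : ∀ v : V, ((a :: L).count v : ℤ) = (L.count v : ℤ) + if a = v then 1 else 0 := by
      intro v; by_cases h : a = v <;> simp [List.count_cons, h] <;> push_cast <;> ring
    simp only [hc]
    simp only [add_mul, ite_mul, one_mul, zero_mul]
    rw [Finset.sum_add_distrib, Finset.sum_ite_eq (Finset.univ) a (fun v => (m v u : ℤ))]
    rcases eq_or_ne u a with rfl | hne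
    · simp [mgFire, hloop u]; ring
    · simp [mgFire, hne, Ne.symm hne]; ring

-- The sum over counts-as-indicator equals a Finset sum
lemma sum_indicator_mul (T : Finset V) (g : V → ℤ) :
    ∑ v, (if v ∈ T then (1:ℤ) else 0) * g v = ∑ v ∈ T, g v := by
  simp only [ite_mul, one_mul, zero_mul]
  rw [Finset.sum_ite_mem, Finset.univ_inter]

-- counts in a legal returning game are constant
lemma counts_const (m : V → V → ℕ) (hsymm : ∀ u v, m u v = m v u)
    (hconn : ∀ u v : V, Relation.ReflTransGen (fun a b => 0 < m a b) u v)
    [Nonempty V]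
    (c : V → ℕ) (hc : ∀ u, ∑ v, (c v : ℤ) * m v u = (c u : ℤ) * mgDeg m u) :
    ∀ u w : V, c u = c w := by
  obtain ⟨u0, -, hmin⟩ := Finset.exists_min_image Finset.univ c ⟨Classical.arbitrary V, Finset.mem_univ _⟩
  have key : ∀ w, c w = c u0 := by
    intro w
    have := hconn u0 w
    induction this with
    | refl => rfl
    | tail hab hM ih =>
      rename_i a b
      -- c a = c u0, m a b > 0, show c b = c u0
      have hdeg : (mgDeg m a : ℤ) = ∑ v, (m v a : ℤ) := by
        simp [mgDeg]
        exact Finset.sum_congr rfl (fun v _ => by rw [hsymm])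
      have heq : ∑ v, ((c v : ℤ) - c a) * m v a = 0 := by
        have := hc a
        rw [hdeg] at this
        rw [Finset.mul_sum] at this
        simp only [sub_mul]
        rw [Finset.sum_sub_distrib, this, sub_self]
      have hzero : ∀ v ∈ Finset.univ, ((c v : ℤ) - c a) * m v a = 0 := by
        rw [← Finset.sum_eq_zero_iff_of_nonneg]
        · exact heq
        · intro v _
          apply mul_nonneg
          · have : c u0 ≤ c v := hmin v (Finset.mem_univ v)
            rw [ih]; push_cast; omega
          · positivity
      have := hzero b (Finset.mem_univ b)
      rcases mul_eq_zero.1 this with h | h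
      · have : (c b : ℤ) = c a := by linarith
        rw [← ih]; exact_mod_cast this
      · exfalso
        have : 0 < m b a := by rw [hsymm]; exact hM
        simp at h; omega
  intro u w; rw [key u, key w]

lemma greedy (m : V → V → ℕ) (hsymm : ∀ u v, m u v = m v u) (hloop : ∀ v, m v v = 0)
    (f : V → ℤ)
    (H : ∀ S : Finset V, S.Nonempty → ∃ v ∈ S, (∑ u ∈ S, (m u v : ℤ)) ≤ f v) :
    ∀ n, n ≤ Fintype.card V → ∃ (T : Finset V) (L : List V), T.card = n ∧
      (∀ v, ((L.count v : ℤ)) = if v ∈ T then 1 else 0) ∧ mgLegal m f L := by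
  intro n
  induction n with
  | zero => exact fun _ => ⟨∅, [], by simp, by simp, trivial⟩
  | succ n ih =>
    intro hn
    obtain ⟨T, L, hcard, hcount, hleg⟩ := ih (le_of_lt (Nat.lt_of_succ_le hn))
    have hTc : Tᶜ.Nonempty := by
      rw [← Finset.card_pos, Finset.card_compl, hcard]
      omega
    obtain ⟨v, hvmem, hv⟩ := H Tᶜ hTc
    have hvT : v ∉ T := Finset.mem_compl.1 hvmem
    have hLv : (L.count v : ℤ) = 0 := by rw [hcount v, if_neg hvT]
    refine ⟨insert v T, L ++ [v], ?_, ?_, ?_⟩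
    · rw [Finset.card_insert_of_notMem hvT, hcard]
    · intro w
      rw [List.count_append]
      push_cast
      rcases eq_or_ne w v with rfl | hw
      · simp [hLv, hvT]
      · rw [hcount w]
        simp [Finset.mem_insert, hw, Ne.symm hw]
    · rw [legal_append_iff]
      refine ⟨hleg, ?_, trivial⟩
      rw [play_eq m hloop]
      have h1 : ∑ u, (L.count u : ℤ) * m u v = ∑ u ∈ T, (m u v : ℤ) := by
        rw [Finset.sum_congr rfl (fun u _ => by rw [hcount u]), sum_indicator_mul]
      have h2 : (mgDeg m v : ℤ) = ∑ u ∈ T, (m u v : ℤ) + ∑ u ∈ Tᶜ, (m u v : ℤ) := by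
        rw [Finset.sum_add_sum_compl]
        simp [mgDeg]
        exact Finset.sum_congr rfl (fun u _ => by rw [hsymm])
      rw [h1, hLv, h2]
      linarith

lemma prefix_count_le (P R : List V) (v : V) : (P.count v) ≤ ((P ++ R).count v) := by
  rw [List.count_append]; omega

-- main claim: recurrent implies for every nonempty S there is a good vertex
lemma claim_S (m : V → V → ℕ) (hsymm : ∀ u v, m u v = m v u) (hloop : ∀ v, m v v = 0)
    (f : V → ℤ) (L : List V) (hleg : mgLegal m f L)
    (k : ℕ) (hk : 1 ≤ k) (hcnt : ∀ v, L.count v = k)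
    (S : Finset V) (hS : S.Nonempty) :
    ∃ v ∈ S, (∑ u ∈ S, (m u v : ℤ)) ≤ f v := by
  classical
  have hPne : ∃ n, ∃ v ∈ S, ((L.take n).count v) = k := by
    obtain ⟨v, hv⟩ := hS
    exact ⟨L.length, v, hv, by rw [List.take_length, hcnt]⟩
  set n0 := Nat.find hPne with hn0def
  obtain ⟨v, hvS, hvk⟩ := Nat.find_spec hPne
  rw [← hn0def] at hvk
  have hnmin : ∀ j, j < n0 → ¬ (∃ v ∈ S, ((L.take j).count v) = k) :=
    fun j hj => Nat.find_min hPne hj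
  have hn0pos : 0 < n0 := by
    rcases Nat.eq_zero_or_pos n0 with h | h
    · exfalso; rw [h] at hvk; simp at hvk; omega
    · exact h
  have hn0le : n0 ≤ L.length := by
    apply Nat.find_le
    obtain ⟨u, hu⟩ := hS
    exact ⟨u, hu, by rw [List.take_length, hcnt]⟩
  set n := n0 - 1 with hndef
  have hnn0 : n + 1 = n0 := by omega
  have hnlt : n < L.length := by omega
  set w := L.get ⟨n, hnlt⟩ with hwdef
  have htake : L.take n0 = L.take n ++ [w] := by
    rw [← hnn0, List.take_succ]
    congr 1
    rw [List.getElem?_eq_getElem hnlt]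
    rfl
  have hcount_le : ∀ u : V, (L.take n).count u ≤ k := by
    intro u
    have := prefix_count_le (L.take n) (L.drop n) u
    rw [List.take_append_drop] at this
    rw [hcnt] at this
    exact this
  have hcount_lt : ∀ u ∈ S, (L.take n).count u < k := by
    intro u hu
    have h1 := hcount_le u
    have h2 : ¬ ((L.take n).count u = k) := by
      intro h
      exact hnmin n (by omega) ⟨u, hu, h⟩
    omega
  -- decompose the count of v
  have hsw : (L.take n0).count v = (L.take n).count v + (if w = v then 1 else 0) := by
    rw [htake, List.count_append]
    congr 1
    by_cases h : w = v <;> simp [List.count_cons, h]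
  have hwv : w = v ∧ (L.take n).count v + 1 = k := by
    rw [hvk] at hsw
    have := hcount_lt v hvS
    by_cases h : w = v
    · rw [if_pos h] at hsw; exact ⟨h, by omega⟩
    · rw [if_neg h] at hsw; omega
  obtain ⟨rfl, hkv⟩ := hwv
  -- legality at position n
  have hdrop : L.drop n = w :: L.drop (n+1) := by
    rw [List.drop_eq_getElem_cons hnlt]
    rfl
  have hlegal2 : mgLegal m (mgPlay m f (L.take n)) (w :: L.drop (n+1)) := by
    have := hleg
    rw [← List.take_append_drop n L, legal_append_iff] at this
    rw [← hdrop]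
    exact this.2
  have hact : (mgDeg m w : ℤ) ≤ mgPlay m f (L.take n) w := hlegal2.1
  rw [play_eq m hloop] at hact
  -- arithmetic
  set cP : V → ℕ := fun u => (L.take n).count u with hcP
  have hsplit : ∑ u, (cP u : ℤ) * m u w =
      ∑ u ∈ S, (cP u : ℤ) * m u w + ∑ u ∈ Sᶜ, (cP u : ℤ) * m u w :=
    (Finset.sum_add_sum_compl S _).symm
  have hdegsplit : (mgDeg m w : ℤ) = ∑ u ∈ S, (m u w : ℤ) + ∑ u ∈ Sᶜ, (m u w : ℤ) := by
    rw [Finset.sum_add_sum_compl]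
    simp [mgDeg]
    exact Finset.sum_congr rfl (fun u _ => by rw [hsymm])
  have hb1 : ∑ u ∈ S, (cP u : ℤ) * m u w ≤ ∑ u ∈ S, (cP w : ℤ) * m u w := by
    apply Finset.sum_le_sum
    intro u hu
    apply mul_le_mul_of_nonneg_right _ (by positivity)
    have h2 : cP u < k := hcount_lt u hu
    have h3 : cP w + 1 = k := hkv
    have : cP u ≤ cP w := by omega
    exact_mod_cast this
  have hb2 : ∑ u ∈ Sᶜ, (cP u : ℤ) * m u w ≤ ∑ u ∈ Sᶜ, ((k : ℤ)) * m u w := by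
    apply Finset.sum_le_sum
    intro u _
    apply mul_le_mul_of_nonneg_right _ (by positivity)
    exact_mod_cast hcount_le u
  refine ⟨w, hvS, ?_⟩
  have hA : ∑ u ∈ S, ((cP w : ℤ)) * m u w = (cP w : ℤ) * ∑ u ∈ S, (m u w : ℤ) := by
    rw [Finset.mul_sum]
  have hB : ∑ u ∈ Sᶜ, ((k : ℤ)) * m u w = (k : ℤ) * ∑ u ∈ Sᶜ, (m u w : ℤ) := by
    rw [Finset.mul_sum]
  have hkZ : (cP w : ℤ) + 1 = k := by exact_mod_cast hkv
  -- put it together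
  have hcc : ((L.take n).count w : ℤ) = (cP w : ℤ) := rfl
  rw [hcc, hsplit, hdegsplit] at hact
  set a := ∑ u ∈ S, (m u w : ℤ) with hadef
  set b := ∑ u ∈ Sᶜ, (m u w : ℤ) with hbdef
  have e1 : (cP w : ℤ) * (a + b) = (cP w : ℤ) * a + (cP w : ℤ) * b := by ring
  have e2 : (k : ℤ) * b = (cP w : ℤ) * b + b := by rw [← hkZ]; ring
  linarith [hb1, hb2, hA, hB, hact, e1, e2]

/-- A divisor on a connected multigraph is recurrent if and only if there is a
legal game from it in which every vertex fires exactly once. -/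
theorem stmt3 [Nonempty V] (m : V → V → ℕ) (hsymm : ∀ u v, m u v = m v u)
    (hloop : ∀ v, m v v = 0) (hconn : mgConnected m) (f : V → ℤ) :
    mgRecurrent m f ↔ ∃ L : List V, mgLegal m f L ∧ ∀ v : V, L.count v = 1 := by
  have hdegsymm : ∀ u : V, (mgDeg m u : ℤ) = ∑ v, (m v u : ℤ) := by
    intro u
    simp [mgDeg]
    exact Finset.sum_congr rfl (fun v _ => by rw [hsymm])
  constructor
  · rintro ⟨L, hne, hleg, hplay⟩
    have hc : ∀ u, ∑ v, ((L.count v : ℤ)) * m v u = (L.count u : ℤ) * mgDeg m u := by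
      intro u
      have h := congrFun hplay u
      rw [play_eq m hloop] at h
      linarith
    have hconst := counts_const m hsymm hconn (fun v => L.count v) hc
    obtain ⟨a, ha⟩ : ∃ a, a ∈ L := List.exists_mem_of_ne_nil L hne
    set k := L.count a with hkdef
    have hk : 1 ≤ k := List.count_pos_iff.2 ha
    have hcnt : ∀ v, L.count v = k := fun v => hconst v a
    have H : ∀ S : Finset V, S.Nonempty → ∃ v ∈ S, (∑ u ∈ S, (m u v : ℤ)) ≤ f v :=
      fun S hS => claim_S m hsymm hloop f L hleg k hk hcnt S hS
    obtain ⟨T, L', hcard, hcount, hleg'⟩ := greedy m hsymm hloop f H (Fintype.card V) le_rfl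
    have hT : T = Finset.univ := (Finset.card_eq_iff_eq_univ T).1 hcard
    refine ⟨L', hleg', fun v => ?_⟩
    have h := hcount v
    rw [hT] at h
    simp at h
    exact_mod_cast h
  · rintro ⟨L, hleg, hcnt⟩
    refine ⟨L, ?_, hleg, ?_⟩
    · obtain ⟨v⟩ := ‹Nonempty V›
      intro h
      rw [h] at hcnt
      have := hcnt v
      simp at this
    · funext u
      rw [play_eq m hloop]
      simp only [hcnt, Nat.cast_one, one_mul]
      rw [← hdegsymm u]
      ring
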